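/- arXiv:2108.06358 — 2 statements merged into one kernel-verified Lean document; each statement's English description precedes it below -/
import Mathlib

section
/- Let H = ℍ[ℚ; −2, −26] and let O be the ℤ-submodule of H spanned by 1, i, (2 + i + j)/4, (2 + 2i + ij)/4 (this is a subring of H), and set u = ij/2 ∈ O, so nrm(u) = 13. Let 𝒲 be the subgroup of invertible 2×2 matrices over H generated by the Cohn matrices W(α), α ∈ O. Then for every γ ∈ 𝒲 with entries γ = [[a, b], [c, d]]: (i) c·u·conj(d) − d·u·conj(c) is scalar and lies in 13ℤ; (ii) a·u·conj(b) − b·u·conj(a) is scalar and lies in 13ℤ; (iii) a·u·conj(d) − b·u·conj(c) − u ∈ 13·O. -/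
open Quaternion
open scoped Quaternion
open Matrix

/-- The Cohn matrix `W(α) = [[α, 1], [−1, 0]]` as an invertible 2×2 matrix over a ring,
with inverse `[[0, −1], [1, α]]`. -/
def CohnUnit {A : Type*} [Ring A] (α : A) : (Matrix (Fin 2) (Fin 2) A)ˣ where
  val := !![α, 1; -1, 0]
  inv := !![0, -1; 1, α]
  val_inv := by
    ext i j
    fin_cases i <;> fin_cases j <;>
      simp [Matrix.mul_apply, Fin.sum_univ_succ, Matrix.one_apply]
  inv_val := by
    ext i j
    fin_cases i <;> fin_cases j <;>
      simp [Matrix.mul_apply, Fin.sum_univ_succ, Matrix.one_apply]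

/-- The maximal order `ℤ ⊕ ℤi ⊕ ℤ(2+i+j)/4 ⊕ ℤ(2+2i+ij)/4` of `ℍ[ℚ; −2, −26]`. -/
noncomputable def order : Submodule ℤ ℍ[ℚ, -2, -26] :=
  Submodule.span ℤ
    ({1, ⟨0, 1, 0, 0⟩, ⟨1 / 2, 1 / 4, 1 / 4, 0⟩, ⟨1 / 2, 1 / 2, 0, 1 / 4⟩} :
      Set ℍ[ℚ, -2, -26])

/-- `𝒲`: the subgroup of invertible 2×2 matrices over `ℍ[ℚ; −2, −26]` generated by the
Cohn matrices `W(α)`, `α ∈ O`. -/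
noncomputable def CohnSubgroup : Subgroup (Matrix (Fin 2) (Fin 2) ℍ[ℚ, -2, -26])ˣ :=
  Subgroup.closure {γ | ∃ α ∈ order, γ = CohnUnit α}

/-! ### Auxiliary lemmas about the order -/

lemma mem_order_of (a b c d : ℤ) :
    (⟨(a:ℚ) + c/2 + d/2, (b:ℚ) + c/4 + d/2, (c:ℚ)/4, (d:ℚ)/4⟩ : ℍ[ℚ, -2, -26]) ∈ order := by
  have h1 : (1 : ℍ[ℚ, -2, -26]) ∈ order := Submodule.subset_span (by simp)
  have h2 : (⟨0,1,0,0⟩ : ℍ[ℚ, -2, -26]) ∈ order := Submodule.subset_span (by simp)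
  have h3 : (⟨1/2,1/4,1/4,0⟩ : ℍ[ℚ, -2, -26]) ∈ order := Submodule.subset_span (by simp)
  have h4 : (⟨1/2,1/2,0,1/4⟩ : ℍ[ℚ, -2, -26]) ∈ order := Submodule.subset_span (by simp)
  have : (⟨(a:ℚ) + c/2 + d/2, (b:ℚ) + c/4 + d/2, (c:ℚ)/4, (d:ℚ)/4⟩ : ℍ[ℚ, -2, -26])
      = a • (1 : ℍ[ℚ, -2, -26]) + b • (⟨0,1,0,0⟩ : ℍ[ℚ, -2, -26])
        + c • (⟨1/2,1/4,1/4,0⟩ : ℍ[ℚ, -2, -26]) + d • (⟨1/2,1/2,0,1/4⟩ : ℍ[ℚ, -2, -26]) := by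
    ext <;> simp [QuaternionAlgebra.ext_iff] <;> ring
  rw [this]
  exact Submodule.add_mem _ (Submodule.add_mem _ (Submodule.add_mem _
    (Submodule.smul_mem _ _ h1) (Submodule.smul_mem _ _ h2)) (Submodule.smul_mem _ _ h3))
    (Submodule.smul_mem _ _ h4)

lemma order_repr {x : ℍ[ℚ, -2, -26]} (hx : x ∈ order) :
    ∃ a b c d : ℤ, x = ⟨(a:ℚ) + c/2 + d/2, (b:ℚ) + c/4 + d/2, (c:ℚ)/4, (d:ℚ)/4⟩ := by
  induction hx using Submodule.span_induction with
  | mem y hy =>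
    rcases hy with h | h | h | h
    · exact ⟨1, 0, 0, 0, by rw [h]; ext <;> norm_num⟩
    · exact ⟨0, 1, 0, 0, by rw [h]; ext <;> norm_num⟩
    · exact ⟨0, 0, 1, 0, by rw [h]; ext <;> norm_num⟩
    · exact ⟨0, 0, 0, 1, by rw [Set.mem_singleton_iff.mp h]; ext <;> norm_num⟩
  | zero => exact ⟨0, 0, 0, 0, by ext <;> norm_num⟩
  | add y z hy hz ihy ihz =>
    obtain ⟨a1, b1, c1, d1, rfl⟩ := ihy
    obtain ⟨a2, b2, c2, d2, rfl⟩ := ihz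
    exact ⟨a1+a2, b1+b2, c1+c2, d1+d2, by ext <;> simp <;> push_cast <;> ring⟩
  | smul r y hy ih =>
    obtain ⟨a1, b1, c1, d1, rfl⟩ := ih
    exact ⟨r*a1, r*b1, r*c1, r*d1, by ext <;> simp <;> push_cast <;> ring⟩

lemma mem_order_comp {x : ℍ[ℚ, -2, -26]} (a b c d : ℤ)
    (h1 : x.re = (a:ℚ) + c/2 + d/2) (h2 : x.imI = (b:ℚ) + c/4 + d/2)
    (h3 : x.imJ = (c:ℚ)/4) (h4 : x.imK = (d:ℚ)/4) : x ∈ order := by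
  have : x = ⟨(a:ℚ) + c/2 + d/2, (b:ℚ) + c/4 + d/2, (c:ℚ)/4, (d:ℚ)/4⟩ := by
    ext <;> assumption
  rw [this]; exact mem_order_of a b c d

lemma order_star_mem {x : ℍ[ℚ, -2, -26]} (hx : x ∈ order) : star x ∈ order := by
  obtain ⟨a, b, c, d, rfl⟩ := order_repr hx
  refine mem_order_comp (a+c+d) (-b) (-c) (-d) ?_ ?_ ?_ ?_ <;>
    simp <;> push_cast <;> ring

lemma order_mul_mem {x y : ℍ[ℚ, -2, -26]} (hx : x ∈ order) (hy : y ∈ order) :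
    x * y ∈ order := by
  obtain ⟨a1, b1, c1, d1, rfl⟩ := order_repr hx
  obtain ⟨a2, b2, c2, d2, rfl⟩ := order_repr hy
  refine mem_order_comp
    (a1*a2 - 2*b1*b2 - b1*c2 - 2*c1*c2 - 2*d1*b2 - d1*c2 - 4*d1*d2)
    (a1*b2 + b1*a2 + b1*d2 + c1*b2 + 2*c1*d2 - 2*d1*c2)
    (a1*c2 - 2*b1*d2 + c1*a2 + c1*c2 + 2*d1*b2 + d1*c2)
    (a1*d2 + b1*c2 - c1*b2 + d1*a2 + d1*c2 + d1*d2) ?_ ?_ ?_ ?_ <;>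
    simp <;> push_cast <;> ring

lemma order_ratl {x : ℍ[ℚ, -2, -26]} (hx : x ∈ order) (h2 : x.imI = 0) (h3 : x.imJ = 0)
    (h4 : x.imK = 0) : ∃ m : ℤ, x = ((m : ℤ) : ℍ[ℚ, -2, -26]) := by
  obtain ⟨a, b, c, d, rfl⟩ := order_repr hx
  simp at h2 h3 h4
  subst h3; subst h4
  simp at h2
  subst h2
  exact ⟨a, by ext <;> simp⟩

noncomputable def u0 : ℍ[ℚ, -2, -26] := ⟨0, 0, 0, 1/2⟩

lemma int_mem_order (m : ℤ) : ((m : ℤ) : ℍ[ℚ, -2, -26]) ∈ order :=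
  mem_order_comp m 0 0 0 (by simp) (by simp) (by simp) (by simp)

lemma one_mem_order : (1 : ℍ[ℚ, -2, -26]) ∈ order := by
  have := int_mem_order 1; simpa using this

lemma key_f {x : ℍ[ℚ, -2, -26]} (hx : x ∈ order) :
    ∃ o ∈ order, x * u0 - u0 * star x = 13 * o := by
  obtain ⟨a, b, c, d, rfl⟩ := order_repr hx
  refine ⟨((-d : ℤ) : ℍ[ℚ, -2, -26]), int_mem_order _, ?_⟩
  have h13 : (13 : ℍ[ℚ, -2, -26]) = ((13:ℚ) : ℍ[ℚ, -2, -26]) := by norm_cast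
  rw [h13]
  ext <;> simp [u0, QuaternionAlgebra.re_ofNat, QuaternionAlgebra.imI_ofNat, QuaternionAlgebra.imJ_ofNat, QuaternionAlgebra.imK_ofNat] <;> push_cast <;> ring

noncomputable def Ju : Matrix (Fin 2) (Fin 2) ℍ[ℚ, -2, -26] := !![0, u0; -u0, 0]

def InvP (γ : (Matrix (Fin 2) (Fin 2) ℍ[ℚ, -2, -26])ˣ) : Prop :=
  (∀ i j, γ.val i j ∈ order) ∧ (∀ i j, γ.inv i j ∈ order) ∧
  (∀ i j, ∃ o ∈ order, (γ.val * Ju * γ.valᴴ) i j = Ju i j + 13 * o)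

lemma invP_one : InvP 1 := by
  refine ⟨?_, ?_, ?_⟩
  · intro i j; fin_cases i <;> fin_cases j <;>
      first
        | (simpa [Matrix.one_apply] using one_mem_order)
        | (simpa [Matrix.one_apply] using (order : Submodule ℤ _).zero_mem)
  · intro i j; fin_cases i <;> fin_cases j <;>
      first
        | (simpa [Matrix.one_apply] using one_mem_order)
        | (simpa [Matrix.one_apply] using (order : Submodule ℤ _).zero_mem)
  · intro i j
    refine ⟨0, (order : Submodule ℤ _).zero_mem, ?_⟩
    simp [Units.val_one]

lemma invP_gen {α : ℍ[ℚ, -2, -26]} (hα : α ∈ order) : InvP (CohnUnit α) := by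
  obtain ⟨oα, hoα, hfα⟩ := key_f hα
  refine ⟨?_, ?_, ?_⟩
  · intro i j; fin_cases i <;> fin_cases j <;>
      first
        | (simpa [CohnUnit] using hα)
        | (simpa [CohnUnit] using one_mem_order)
        | (simpa [CohnUnit] using (order : Submodule ℤ _).neg_mem one_mem_order)
        | (simpa [CohnUnit] using (order : Submodule ℤ _).zero_mem)
  · intro i j; fin_cases i <;> fin_cases j <;>
      first
        | (simpa [CohnUnit] using hα)
        | (simpa [CohnUnit] using one_mem_order)
        | (simpa [CohnUnit] using (order : Submodule ℤ _).neg_mem one_mem_order)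
        | (simpa [CohnUnit] using (order : Submodule ℤ _).zero_mem)
  · intro i j
    have hS : ((CohnUnit α).val * Ju * (CohnUnit α).valᴴ) =
        !![α * u0 - u0 * star α, u0; -u0, 0] := by
      show (!![α, 1; -1, 0] * Ju * !![α, 1; -1, 0]ᴴ) = _
      refine Matrix.ext fun i j => ?_
      fin_cases i <;> fin_cases j <;>
        simp [Ju, Matrix.mul_apply, Matrix.conjTranspose_apply, Fin.sum_univ_succ] <;>
        noncomm_ring
    rw [hS]
    fin_cases i <;> fin_cases j
    · refine ⟨oα, hoα, ?_⟩; simpa [Ju] using hfα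
    · exact ⟨0, (order : Submodule ℤ _).zero_mem, by simp [Ju]⟩
    · exact ⟨0, (order : Submodule ℤ _).zero_mem, by simp [Ju]⟩
    · exact ⟨0, (order : Submodule ℤ _).zero_mem, by simp [Ju]⟩

lemma invP_mul {γ δ : (Matrix (Fin 2) (Fin 2) ℍ[ℚ, -2, -26])ˣ} (hγ : InvP γ) (hδ : InvP δ) :
    InvP (γ * δ) := by
  obtain ⟨hγv, hγi, hγS⟩ := hγ
  obtain ⟨hδv, hδi, hδS⟩ := hδ
  choose N hNmem hNeq using hδS
  have hδJu : δ.val * Ju * δ.valᴴ = Ju + (13:ℕ) • Matrix.of N := by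
    refine Matrix.ext fun i j => ?_
    rw [Matrix.add_apply, Matrix.smul_apply, hNeq i j, nsmul_eq_mul]
    norm_num
  refine ⟨?_, ?_, ?_⟩
  · intro i j
    show (γ.val * δ.val) i j ∈ order
    rw [Matrix.mul_apply, Fin.sum_univ_two]
    exact (order : Submodule ℤ _).add_mem (order_mul_mem (hγv _ _) (hδv _ _))
      (order_mul_mem (hγv _ _) (hδv _ _))
  · intro i j
    show (δ.inv * γ.inv) i j ∈ order
    rw [Matrix.mul_apply, Fin.sum_univ_two]
    exact (order : Submodule ℤ _).add_mem (order_mul_mem (hδi _ _) (hγi _ _))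
      (order_mul_mem (hδi _ _) (hγi _ _))
  · intro i j
    have hmem : (γ.val * Matrix.of N * γ.valᴴ) i j ∈ order := by
      rw [Matrix.mul_apply, Fin.sum_univ_two]
      refine (order : Submodule ℤ _).add_mem ?_ ?_ <;>
      · rw [Matrix.mul_apply, Fin.sum_univ_two, add_mul]
        exact (order : Submodule ℤ _).add_mem
          (order_mul_mem (order_mul_mem (hγv _ _) (hNmem _ _)) (order_star_mem (hγv _ _)))
          (order_mul_mem (order_mul_mem (hγv _ _) (hNmem _ _)) (order_star_mem (hγv _ _)))
    obtain ⟨o1, ho1, ho1eq⟩ := hγS i j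
    refine ⟨o1 + (γ.val * Matrix.of N * γ.valᴴ) i j,
      (order : Submodule ℤ _).add_mem ho1 hmem, ?_⟩
    have key : ((γ * δ).val * Ju * (γ * δ).valᴴ) =
        γ.val * Ju * γ.valᴴ + (13:ℕ) • (γ.val * Matrix.of N * γ.valᴴ) := by
      have h0 : (γ * δ).val = γ.val * δ.val := rfl
      rw [h0, Matrix.conjTranspose_mul]
      calc γ.val * δ.val * Ju * (δ.valᴴ * γ.valᴴ)
          = γ.val * (δ.val * Ju * δ.valᴴ) * γ.valᴴ := by noncomm_ring
        _ = γ.val * (Ju + (13:ℕ) • Matrix.of N) * γ.valᴴ := by rw [hδJu]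
        _ = _ := by
            rw [mul_add, add_mul, mul_smul_comm, smul_mul_assoc]
    rw [key, Matrix.add_apply, ho1eq, Matrix.smul_apply, nsmul_eq_mul]
    push_cast
    noncomm_ring

lemma invP_inv {γ : (Matrix (Fin 2) (Fin 2) ℍ[ℚ, -2, -26])ˣ} (hγ : InvP γ) : InvP γ⁻¹ := by
  obtain ⟨hγv, hγi, hγS⟩ := hγ
  choose N hNmem hNeq using hγS
  have hγJu : γ.val * Ju * γ.valᴴ = Ju + (13:ℕ) • Matrix.of N := by
    refine Matrix.ext fun i j => ?_
    rw [Matrix.add_apply, Matrix.smul_apply, hNeq i j, nsmul_eq_mul]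
    norm_num
  have hinv : (γ⁻¹).val = γ.inv := rfl
  have hJu' : (γ⁻¹).val * Ju * (γ⁻¹).valᴴ = Ju - (13:ℕ) • (γ.inv * Matrix.of N * γ.invᴴ) := by
    rw [hinv]
    have h1 : γ.inv * γ.val = 1 := γ.inv_val
    have h2 : γ.valᴴ * γ.invᴴ = 1 := by
      rw [← Matrix.conjTranspose_mul, h1, Matrix.conjTranspose_one]
    have h3 : γ.inv * (γ.val * Ju * γ.valᴴ) * γ.invᴴ = Ju := by
      calc γ.inv * (γ.val * Ju * γ.valᴴ) * γ.invᴴ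
          = (γ.inv * γ.val) * (Ju * (γ.valᴴ * γ.invᴴ)) := by noncomm_ring
        _ = Ju := by rw [h1, h2, Matrix.one_mul, Matrix.mul_one]
    rw [hγJu] at h3
    have expand : γ.inv * (Ju + (13:ℕ) • Matrix.of N) * γ.invᴴ =
        γ.inv * Ju * γ.invᴴ + (13:ℕ) • (γ.inv * Matrix.of N * γ.invᴴ) := by
      rw [mul_add, add_mul, mul_smul_comm, smul_mul_assoc]
    rw [expand] at h3
    exact eq_sub_of_add_eq h3
  refine ⟨fun i j => hγi i j, fun i j => hγv i j, ?_⟩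
  intro i j
  have hmem : (γ.inv * Matrix.of N * γ.invᴴ) i j ∈ order := by
    rw [Matrix.mul_apply, Fin.sum_univ_two]
    refine (order : Submodule ℤ _).add_mem ?_ ?_ <;>
    · rw [Matrix.mul_apply, Fin.sum_univ_two, add_mul]
      exact (order : Submodule ℤ _).add_mem
        (order_mul_mem (order_mul_mem (hγi _ _) (hNmem _ _)) (order_star_mem (hγi _ _)))
        (order_mul_mem (order_mul_mem (hγi _ _) (hNmem _ _)) (order_star_mem (hγi _ _)))
  refine ⟨-((γ.inv * Matrix.of N * γ.invᴴ) i j), (order : Submodule ℤ _).neg_mem hmem, ?_⟩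
  rw [hJu', Matrix.sub_apply, Matrix.smul_apply, nsmul_eq_mul]
  push_cast
  noncomm_ring

lemma invP_of_mem {γ : (Matrix (Fin 2) (Fin 2) ℍ[ℚ, -2, -26])ˣ} (hγ : γ ∈ CohnSubgroup) :
    InvP γ := by
  induction hγ using Subgroup.closure_induction with
  | mem g hg => obtain ⟨α, hα, rfl⟩ := hg; exact invP_gen hα
  | one => exact invP_one
  | mul x y hx hy ihx ihy => exact invP_mul ihx ihy
  | inv x hx ih => exact invP_inv ih

/-- For `γ = [[a,b],[c,d]] ∈ 𝒲` and `u = ij/2` (of norm 13):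
(i) `c·u·conj d − d·u·conj c` is a scalar in `13ℤ`;
(ii) `a·u·conj b − b·u·conj a` is a scalar in `13ℤ`;
(iii) `a·u·conj d − b·u·conj c − u ∈ 13·O`. -/
theorem cohn_congruence_neg2_neg26
    (γ : (Matrix (Fin 2) (Fin 2) ℍ[ℚ, -2, -26])ˣ) (hγ : γ ∈ CohnSubgroup)
    (u : ℍ[ℚ, -2, -26]) (hu : u = ⟨0, 0, 0, 1 / 2⟩)
    (a b c d : ℍ[ℚ, -2, -26]) (ha : a = γ.1 0 0) (hb : b = γ.1 0 1)
    (hc : c = γ.1 1 0) (hd : d = γ.1 1 1) :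
    (∃ m : ℤ, c * u * star d - d * u * star c = ((13 * m : ℤ) : ℍ[ℚ, -2, -26])) ∧
    (∃ m : ℤ, a * u * star b - b * u * star a = ((13 * m : ℤ) : ℍ[ℚ, -2, -26])) ∧
    (∃ o ∈ order, a * u * star d - b * u * star c - u = (13 : ℍ[ℚ, -2, -26]) * o) := by
  obtain ⟨hval, hinv, hS⟩ := invP_of_mem hγ
  have hu0 : u = u0 := by rw [hu]; rfl
  have h13 : (13 : ℍ[ℚ, -2, -26]) = ((13:ℚ) : ℍ[ℚ, -2, -26]) := by norm_cast
  -- entries of S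
  have hS11 : (γ.val * Ju * γ.valᴴ) 1 1 = c * u0 * star d - d * u0 * star c := by
    rw [hc, hd]
    simp [Ju, Matrix.mul_apply, Fin.sum_univ_two, Matrix.conjTranspose_apply]
    noncomm_ring
  have hS00 : (γ.val * Ju * γ.valᴴ) 0 0 = a * u0 * star b - b * u0 * star a := by
    rw [ha, hb]
    simp [Ju, Matrix.mul_apply, Fin.sum_univ_two, Matrix.conjTranspose_apply]
    noncomm_ring
  have hS01 : (γ.val * Ju * γ.valᴴ) 0 1 = a * u0 * star d - b * u0 * star c := by
    rw [ha, hb, hc, hd]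
    simp [Ju, Matrix.mul_apply, Fin.sum_univ_two, Matrix.conjTranspose_apply]
    noncomm_ring
  refine ⟨?_, ?_, ?_⟩
  · obtain ⟨o, ho, hoeq⟩ := hS 1 1
    rw [hS11] at hoeq
    have heq : c * u * star d - d * u * star c = 13 * o := by
      rw [hu0, hoeq]; simp [Ju]
    -- scalarity
    have him : (c * u * star d - d * u * star c).imI = 0 := by
      rw [hu]; simp; ring
    have hjm : (c * u * star d - d * u * star c).imJ = 0 := by
      rw [hu]; simp; ring
    have hkm : (c * u * star d - d * u * star c).imK = 0 := by
      rw [hu]; simp; ring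
    rw [heq, h13] at him hjm hkm
    simp [QuaternionAlgebra.re_ofNat, QuaternionAlgebra.imI_ofNat, QuaternionAlgebra.imJ_ofNat, QuaternionAlgebra.imK_ofNat] at him hjm hkm
    obtain ⟨m, rfl⟩ := order_ratl ho him hjm hkm
    exact ⟨m, by rw [heq]; push_cast; ring⟩
  · obtain ⟨o, ho, hoeq⟩ := hS 0 0
    rw [hS00] at hoeq
    have heq : a * u * star b - b * u * star a = 13 * o := by
      rw [hu0, hoeq]; simp [Ju]
    have him : (a * u * star b - b * u * star a).imI = 0 := by
      rw [hu]; simp; ring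
    have hjm : (a * u * star b - b * u * star a).imJ = 0 := by
      rw [hu]; simp; ring
    have hkm : (a * u * star b - b * u * star a).imK = 0 := by
      rw [hu]; simp; ring
    rw [heq, h13] at him hjm hkm
    simp [QuaternionAlgebra.re_ofNat, QuaternionAlgebra.imI_ofNat, QuaternionAlgebra.imJ_ofNat, QuaternionAlgebra.imK_ofNat] at him hjm hkm
    obtain ⟨m, rfl⟩ := order_ratl ho him hjm hkm
    exact ⟨m, by rw [heq]; push_cast; ring⟩
  · obtain ⟨o, ho, hoeq⟩ := hS 0 1
    rw [hS01] at hoeq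
    refine ⟨o, ho, ?_⟩
    rw [hu0, hoeq]
    simp [Ju]
end

section
/- Let H = ℍ[ℚ; −2, −26], let O be the ℤ-submodule of H spanned by 1, i, (2 + i + j)/4, (2 + 2i + ij)/4 (a subring of H), set u = ij/2 ∈ O, and let 𝒲 be the subgroup of invertible 2×2 matrices over H generated by the Cohn matrices W(α), α ∈ O. Put ρ = (13 + 13i)/2 + j + (5/4)·ij ∈ H. Then for every γ = [[a, b], [c, d]] ∈ 𝒲, setting κ = c·u·conj(d) − d·u·conj(c), κ' = a·u·conj(b) − b·u·conj(a) (both of which are scalar), and ξ = a·u·conj(d) − b·u·conj(c), the rational number B := (1/2)·(−13·κ' − 13·κ + tr(ρ·conj(ξ))) lies in the set (13/2)·(5 + 13ℤ) = {(13/2)·(5 + 13m) : m ∈ ℤ}; in particular |B| ≥ 65/2. -/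
open Quaternion
open scoped Quaternion

/- ### Auxiliary material -/

/-- Element of the order with integer coordinates in the basis
`1, i, (2+i+j)/4, (2+2i+ij)/4`. -/
noncomputable def qq (x y z w : ℤ) : ℍ[ℚ, -2, -26] :=
  ⟨x + z/2 + w/2, y + z/4 + w/2, z/4, w/4⟩

lemma coeH (r : ℚ) : (r : ℍ[ℚ, -2, -26]) = ⟨r, 0, 0, 0⟩ := rfl

lemma mem_order_iff {α : ℍ[ℚ, -2, -26]} (hα : α ∈ order) :
    ∃ x y z w : ℤ, α = qq x y z w := by
  induction hα using Submodule.span_induction with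
  | mem v hv =>
    rcases hv with rfl | rfl | rfl | rfl
    · exact ⟨1, 0, 0, 0, by ext <;> simp [qq]⟩
    · exact ⟨0, 1, 0, 0, by ext <;> simp [qq]⟩
    · exact ⟨0, 0, 1, 0, by ext <;> simp [qq]⟩
    · exact ⟨0, 0, 0, 1, by ext <;> simp [qq]⟩
  | zero => exact ⟨0, 0, 0, 0, by ext <;> simp [qq]⟩
  | add v w _ _ ihv ihw =>
    obtain ⟨a, b, c, d, rfl⟩ := ihv
    obtain ⟨a', b', c', d', rfl⟩ := ihw
    exact ⟨a + a', b + b', c + c', d + d', by ext <;> simp [qq] <;> push_cast <;> ring⟩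
  | smul n v _ ihv =>
    obtain ⟨a, b, c, d, rfl⟩ := ihv
    refine ⟨n * a, n * b, n * c, n * d, ?_⟩
    rw [zsmul_eq_mul]
    ext <;> simp [qq] <;> push_cast <;> ring

lemma qq_mem (x y z w : ℤ) : qq x y z w ∈ order := by
  have h : qq x y z w = x • (1 : ℍ[ℚ, -2, -26]) + y • (⟨0, 1, 0, 0⟩ : ℍ[ℚ, -2, -26])
      + z • (⟨1/2, 1/4, 1/4, 0⟩ : ℍ[ℚ, -2, -26]) + w • (⟨1/2, 1/2, 0, 1/4⟩ : ℍ[ℚ, -2, -26]) := by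
    simp only [zsmul_eq_mul]
    ext <;> simp [qq] <;> push_cast <;> ring
  rw [h]
  refine Submodule.add_mem _ (Submodule.add_mem _ (Submodule.add_mem _ ?_ ?_) ?_) ?_ <;>
    exact Submodule.smul_mem _ _ (Submodule.subset_span (by simp))

/-- The quaternion `u = ij/2`. -/
noncomputable def qu : ℍ[ℚ, -2, -26] := ⟨0, 0, 0, 1/2⟩

/-- The Hermitian matrix `U = [[0, u], [-u, 0]]`. -/
noncomputable def Umat : Matrix (Fin 2) (Fin 2) ℍ[ℚ, -2, -26] := !![0, qu; -qu, 0]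

/-- The invariant carried through the induction over `𝒲`. -/
def Good (γ : (Matrix (Fin 2) (Fin 2) ℍ[ℚ, -2, -26])ˣ) : Prop :=
  ∃ m m' p q r s : ℤ,
    (γ.1 * Umat * star γ.1) 0 0 = (((13 * m' : ℤ) : ℚ) : ℍ[ℚ, -2, -26]) ∧
    (γ.1 * Umat * star γ.1) 1 1 = (((13 * m : ℤ) : ℚ) : ℍ[ℚ, -2, -26]) ∧
    (γ.1 * Umat * star γ.1) 0 1 = qu + ((13 : ℚ) : ℍ[ℚ, -2, -26]) * qq p q r s ∧
    (γ.1 * Umat * star γ.1) 1 0 = -qu + ((13 : ℚ) : ℍ[ℚ, -2, -26]) * star (qq p q r s)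

lemma entry_mul_mul (A N C : Matrix (Fin 2) (Fin 2) ℍ[ℚ, -2, -26]) (i j : Fin 2) :
    (A * N * C) i j = A i 0 * N 0 0 * C 0 j + A i 0 * N 0 1 * C 1 j
      + A i 1 * N 1 0 * C 0 j + A i 1 * N 1 1 * C 1 j := by
  simp only [Matrix.mul_apply, Fin.sum_univ_two, add_mul]
  abel

lemma good_one : Good 1 := by
  refine ⟨0, 0, 0, 0, 0, 0, ?_, ?_, ?_, ?_⟩ <;>
  · rw [Units.val_one, one_mul, star_one, mul_one]
    simp only [Umat]
    norm_num [qu, qq, coeH]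
    try (ext <;> simp [qu, qq, coeH])


lemma good_mul_left (α : ℍ[ℚ, -2, -26]) (hα : α ∈ order)
    (γ : (Matrix (Fin 2) (Fin 2) ℍ[ℚ, -2, -26])ˣ) (hγ : Good γ) :
    Good (CohnUnit α * γ) := by
  obtain ⟨x, y, z, w, rfl⟩ := mem_order_iff hα
  obtain ⟨m, m', p, q, r, s, h00, h11, h01, h10⟩ := hγ
  have hW : ((CohnUnit (qq x y z w) * γ).1 * Umat * star (CohnUnit (qq x y z w) * γ).1)
      = (CohnUnit (qq x y z w)).1 * (γ.1 * Umat * star γ.1) * star (CohnUnit (qq x y z w)).1 := by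
    rw [Units.val_mul, star_mul]
    simp only [mul_assoc]
  have hv00 : (CohnUnit (qq x y z w)).1 0 0 = qq x y z w := by simp [CohnUnit]
  have hv01 : (CohnUnit (qq x y z w)).1 0 1 = 1 := by simp [CohnUnit]
  have hv10 : (CohnUnit (qq x y z w)).1 1 0 = -1 := by simp [CohnUnit]
  have hv11 : (CohnUnit (qq x y z w)).1 1 1 = 0 := by simp [CohnUnit]
  refine ⟨m', m' * (x^2 + 2*y^2 + 2*z^2 + 4*w^2 + x*z + x*w + y*z + 2*y*w + z*w)
      + m - w + x*(2*p + r + s) + y*(-4*q - r - 2*s) + z*(p - q - 3*r) + w*(p - 2*q - 7*s),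
      -m'*x - p - r - s, -m'*y + q, -m'*z + r, -m'*w + s, ?_, ?_, ?_, ?_⟩ <;>
    rw [hW, entry_mul_mul] <;>
    simp only [Matrix.star_apply, hv00, hv01, hv10, hv11, h00, h11, h01, h10] <;>
    rw [coeH, coeH, coeH] <;>
    (try rw [coeH]) <;>
    ext <;>
    simp [qq, qu] <;> push_cast <;> ring

lemma good_inv_mul (α : ℍ[ℚ, -2, -26]) (hα : α ∈ order)
    (γ : (Matrix (Fin 2) (Fin 2) ℍ[ℚ, -2, -26])ˣ) (hγ : Good γ) :
    Good ((CohnUnit α)⁻¹ * γ) := by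
  obtain ⟨x, y, z, w, rfl⟩ := mem_order_iff hα
  obtain ⟨m, m', p, q, r, s, h00, h11, h01, h10⟩ := hγ
  have hW : (((CohnUnit (qq x y z w))⁻¹ * γ).1 * Umat * star ((CohnUnit (qq x y z w))⁻¹ * γ).1)
      = ((CohnUnit (qq x y z w))⁻¹).1 * (γ.1 * Umat * star γ.1)
          * star ((CohnUnit (qq x y z w))⁻¹).1 := by
    rw [Units.val_mul, star_mul]
    simp only [mul_assoc]
  have hv : ((CohnUnit (qq x y z w))⁻¹).1 = !![0, -1; 1, qq x y z w] := rfl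
  have hv00 : ((CohnUnit (qq x y z w))⁻¹).1 0 0 = 0 := by rw [hv]; simp
  have hv01 : ((CohnUnit (qq x y z w))⁻¹).1 0 1 = -1 := by rw [hv]; simp
  have hv10 : ((CohnUnit (qq x y z w))⁻¹).1 1 0 = 1 := by rw [hv]; simp
  have hv11 : ((CohnUnit (qq x y z w))⁻¹).1 1 1 = qq x y z w := by rw [hv]; simp
  refine ⟨m' + w + x*(2*p + r + s) + y*(4*q + r + 2*s) + z*(p + q + 4*r + s)
      + w*(p + 2*q + r + 8*s)
      + m * (x^2 + 2*y^2 + 2*z^2 + 4*w^2 + x*z + x*w + y*z + 2*y*w + z*w), m,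
      -p - r - s - m*(x + z + w), q + m*y, r + m*z, s + m*w, ?_, ?_, ?_, ?_⟩ <;>
    rw [hW, entry_mul_mul] <;>
    simp only [Matrix.star_apply, hv00, hv01, hv10, hv11, h00, h11, h01, h10] <;>
    rw [coeH, coeH, coeH] <;>
    (try rw [coeH]) <;>
    ext <;>
    simp [qq, qu] <;> push_cast <;> ring

lemma good_of_mem (γ : (Matrix (Fin 2) (Fin 2) ℍ[ℚ, -2, -26])ˣ) (hγ : γ ∈ CohnSubgroup) :
    Good γ := by
  induction hγ using Subgroup.closure_induction_left with
  | one => exact good_one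
  | mul_left x hx y hy ih =>
      obtain ⟨α, hα, rfl⟩ := hx
      exact good_mul_left α hα y ih
  | inv_mul_cancel x hx y hy ih =>
      obtain ⟨α, hα, rfl⟩ := hx
      exact good_inv_mul α hα y ih

/-- The pairing of the forbidden ball with data `(13, 13, ρ)`,
`ρ = (13+13i)/2 + j + (5/4)ij`, against any sphere `γ.S_u`, `γ ∈ 𝒲`, lies in
`(13/2)·(5 + 13ℤ)`; in particular it has absolute value at least `65/2`. -/
theorem forbidden_ball_neg2_neg26
    (γ : (Matrix (Fin 2) (Fin 2) ℍ[ℚ, -2, -26])ˣ) (hγ : γ ∈ CohnSubgroup)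
    (u ρ : ℍ[ℚ, -2, -26]) (hu : u = ⟨0, 0, 0, 1 / 2⟩) (hρ : ρ = ⟨13 / 2, 13 / 2, 1, 5 / 4⟩)
    (a b c d : ℍ[ℚ, -2, -26]) (ha : a = γ.1 0 0) (hb : b = γ.1 0 1)
    (hc : c = γ.1 1 0) (hd : d = γ.1 1 1)
    (κ κ' ξ B : ℍ[ℚ, -2, -26])
    (hκ : κ = c * u * star d - d * u * star c)
    (hκ' : κ' = a * u * star b - b * u * star a)
    (hξ : ξ = a * u * star d - b * u * star c)
    (hB : B = (2 : ℚ)⁻¹ •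
      (-(13 * κ') - 13 * κ + (ρ * star ξ + star (ρ * star ξ)))) :
    ∃ q : ℚ, B = (q : ℍ[ℚ, -2, -26]) ∧
      (∃ m : ℤ, q = 13 / 2 * (5 + 13 * m)) ∧ 65 / 2 ≤ |q| := by
  subst hu hρ ha hb hc hd hκ hκ' hξ hB
  obtain ⟨m, m', p, q, r, s, h00, h11, h01, h10⟩ := good_of_mem γ hγ
  have hq : (⟨0,0,0,1/2⟩ : ℍ[ℚ, -2, -26]) = qu := rfl
  rw [hq]
  have hU00 : Umat 0 0 = 0 := by simp [Umat]
  have hU01 : Umat 0 1 = qu := by simp [Umat]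
  have hU10 : Umat 1 0 = -qu := by simp [Umat]
  have hU11 : Umat 1 1 = 0 := by simp [Umat]
  have e00 : (γ.1 * Umat * star γ.1) 0 0
      = γ.1 0 0 * qu * star (γ.1 0 1) - γ.1 0 1 * qu * star (γ.1 0 0) := by
    rw [entry_mul_mul, hU00, hU01, hU10, hU11]
    simp only [Matrix.star_apply]
    noncomm_ring
  have e01 : (γ.1 * Umat * star γ.1) 0 1
      = γ.1 0 0 * qu * star (γ.1 1 1) - γ.1 0 1 * qu * star (γ.1 1 0) := by
    rw [entry_mul_mul, hU00, hU01, hU10, hU11]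
    simp only [Matrix.star_apply]
    noncomm_ring
  have e11 : (γ.1 * Umat * star γ.1) 1 1
      = γ.1 1 0 * qu * star (γ.1 1 1) - γ.1 1 1 * qu * star (γ.1 1 0) := by
    rw [entry_mul_mul, hU00, hU01, hU10, hU11]
    simp only [Matrix.star_apply]
    noncomm_ring
  rw [e00] at h00
  rw [e01] at h01
  rw [e11] at h11
  set MM : ℤ := -m - m' + p + 2*q + 2*r + 4*s with hMM
  refine ⟨13/2 * ((5 + 13*MM : ℤ) : ℚ), ?_, ⟨MM, by push_cast; ring⟩, ?_⟩
  · have h13 : (13 : ℍ[ℚ, -2, -26]) = ⟨13,0,0,0⟩ := rfl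
    rw [h00, h11, h01]
    rw [coeH] at h00 h11 ⊢
    rw [coeH, coeH, h13]
    ext <;> simp [qq, qu] <;> push_cast [hMM, QuaternionAlgebra.re_ofNat, QuaternionAlgebra.imI_ofNat,
      QuaternionAlgebra.imJ_ofNat, QuaternionAlgebra.imK_ofNat] <;> ring
  · have h5 : (5 : ℤ) ≤ |5 + 13 * MM| := by
      rcases le_or_gt 0 MM with h | h
      · rw [abs_of_nonneg (by omega)]; omega
      · rw [abs_of_nonpos (by omega)]; omega
    have h5' : (5 : ℚ) ≤ |((5 + 13 * MM : ℤ) : ℚ)| := by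
      rw [← Int.cast_abs]; exact_mod_cast h5
    rw [abs_mul]
    calc (65/2 : ℚ) = |(13/2 : ℚ)| * 5 := by
          rw [abs_of_pos (by norm_num : (0:ℚ) < 13/2)]; norm_num
      _ ≤ |(13/2 : ℚ)| * |((5 + 13 * MM : ℤ) : ℚ)| := by
          apply mul_le_mul_of_nonneg_left h5' (by norm_num)
end
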